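/- Let f(x) = f_0 + f_1x^{p^s} + f_2x^{2p^s} + ⋯ + f_nx^{np^s} ∈ R^t[x] with f_i = f_{i,0} + uf_{i,1} + ⋯ + u^{t−1}f_{i,t−1}, f_{i,j} ∈ F, and for each i let f̃_{i,0} be the unique element of F with f̃_{i,0}^{p^s} = f_{i,0}. If the polynomial f̃_{0,0} + f̃_{1,0}x + ⋯ + f̃_{n,0}x^n ∈ F[x] is an irreducible polynomial of degree n, then the image of every nonzero polynomial g ∈ F[x] of degree less than n is invertible in the quotient ring R^t[x]/⟨f(x)⟩. -/

import Mathlib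

open Polynomial

/-- The finite chain ring `R^t = 𝔽_{p^m}[u]/⟨u^t⟩`. -/
abbrev Rt (p m t : ℕ) [Fact p.Prime] : Type _ :=
  Polynomial (GaloisField p m) ⧸ Ideal.span {(X : Polynomial (GaloisField p m)) ^ t}

noncomputable instance (p m t : ℕ) [Fact p.Prime] : CommRing (Rt p m t) := Ideal.Quotient.commRing _

/-- The canonical projection `𝔽_{p^m}[u] → R^t`. -/
noncomputable def mkRt (p m t : ℕ) [Fact p.Prime] :
    Polynomial (GaloisField p m) →+* Rt p m t :=
  Ideal.Quotient.mk _

/-- The canonical embedding `𝔽_{p^m} → R^t`. -/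
noncomputable def κ (p m t : ℕ) [Fact p.Prime] : GaloisField p m →+* Rt p m t :=
  (mkRt p m t).comp (C : GaloisField p m →+* Polynomial (GaloisField p m))

/-- Let `f(x) = f₀ + f₁x^{p^s} + ⋯ + fₙx^{np^s} ∈ R^t[x]` with
`fᵢ = f_{i,0} + u f_{i,1} + ⋯ + u^{t-1} f_{i,t-1}` and let `f̃_{i,0}` be the unique `p^s`-th
root of `f_{i,0}` in `𝔽_{p^m}`.  If `f̃_{0,0} + f̃_{1,0}x + ⋯ + f̃_{n,0}xⁿ` is an irreducible
polynomial of degree `n` over `𝔽_{p^m}`, then the image of every nonzero polynomial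
`g ∈ 𝔽_{p^m}[x]` of degree less than `n` is invertible in `R^t[x]/⟨f(x)⟩`. -/
theorem stmt_2 (p m s t n : ℕ) [Fact p.Prime] (hm : m ≠ 0) (ht : 1 ≤ t) (hn : 1 ≤ n)
    (fc : ℕ → ℕ → GaloisField p m) (ftil : ℕ → GaloisField p m)
    (hftil : ∀ i, ftil i ^ p ^ s = fc i 0)
    (hirr : Irreducible (∑ i ∈ Finset.range (n + 1), C (ftil i) * X ^ i))
    (hdeg : (∑ i ∈ Finset.range (n + 1), C (ftil i) * X ^ i).natDegree = n) :
    ∀ g : Polynomial (GaloisField p m), g ≠ 0 → g.degree < (n : ℕ) →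
      IsUnit (Ideal.Quotient.mk
        (Ideal.span {(∑ i ∈ Finset.range (n + 1),
          C (mkRt p m t (∑ j ∈ Finset.range t, C (fc i j) * X ^ j)) * X ^ (i * p ^ s) :
            Polynomial (Rt p m t))})
        (g.map (κ p m t))) := by
  intro g hg0 hgdeg
  set ft : Polynomial (GaloisField p m) := ∑ i ∈ Finset.range (n + 1), C (ftil i) * X ^ i with hft
  -- coprimality of g and ft
  have hnotdvd : ¬ ft ∣ g := by
    intro hdvd
    have h1 : ft.degree ≤ g.degree := Polynomial.degree_le_of_dvd hdvd hg0
    have h2 : ft.degree = (n : ℕ) := by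
      rw [Polynomial.degree_eq_natDegree hirr.ne_zero, hdeg]
    rw [h2] at h1
    exact absurd (lt_of_le_of_lt h1 hgdeg) (lt_irrefl _)
  have hcop : IsCoprime g (ft ^ p ^ s) :=
    ((hirr.coprime_iff_not_dvd.mpr hnotdvd).symm).pow_right
  obtain ⟨a, b, hab⟩ := hcop
  -- Frobenius identity
  have hfrob : ft ^ p ^ s =
      ∑ i ∈ Finset.range (n + 1), C (fc i 0) * X ^ (i * p ^ s) := by
    rw [hft, sum_pow_char_pow]
    refine Finset.sum_congr rfl fun i _ => ?_
    rw [mul_pow, ← Polynomial.C_pow, ← pow_mul, hftil]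
  -- notation
  set φ : Polynomial (GaloisField p m) →+* Polynomial (Rt p m t) := Polynomial.mapRingHom (κ p m t) with hφ
  set fpoly : Polynomial (Rt p m t) := ∑ i ∈ Finset.range (n + 1),
      C (mkRt p m t (∑ j ∈ Finset.range t, C (fc i j) * X ^ j)) * X ^ (i * p ^ s) with hfpoly
  set U : Polynomial (Rt p m t) := C (mkRt p m t X) with hU
  -- φ (ft ^ p^s)
  have hφft : φ (ft ^ p ^ s) = ∑ i ∈ Finset.range (n + 1),
      C (κ p m t (fc i 0)) * X ^ (i * p ^ s) := by
    rw [hfrob, map_sum]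
    refine Finset.sum_congr rfl fun i _ => ?_
    simp [hφ]
  -- U divides fpoly - φ (ft ^ p^s)
  have hdvdU : U ∣ fpoly - φ (ft ^ p ^ s) := by
    rw [hφft, hfpoly, ← Finset.sum_sub_distrib]
    refine Finset.dvd_sum fun i _ => ?_
    rw [← sub_mul]
    refine Dvd.dvd.mul_right ?_ _
    have : κ p m t (fc i 0) = mkRt p m t (C (fc i 0)) := rfl
    have hXdvd : (X : Polynomial (GaloisField p m)) ∣ ((∑ j ∈ Finset.range t, C (fc i j) * X ^ j) - C (fc i 0)) := by
      rw [Polynomial.X_dvd_iff]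
      simp only [Polynomial.coeff_sub, Polynomial.finset_sum_coeff, Polynomial.coeff_C_mul,
        Polynomial.coeff_X_pow, Polynomial.coeff_C]
      rw [Finset.sum_eq_single 0]
      · simp
      · intro j _ hj; simp [eq_comm, hj]
      · intro h; exact absurd (Finset.mem_range.mpr ht) h
    obtain ⟨c, hc⟩ := hXdvd
    rw [this, ← map_sub, ← map_sub, hc, map_mul, Polynomial.C_mul]
    exact dvd_mul_right _ _
  obtain ⟨h, hh⟩ := hdvdU
  -- pass to the quotient
  set I : Ideal (Polynomial (Rt p m t)) := Ideal.span {fpoly} with hI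
  set mkQ := Ideal.Quotient.mk I with hmkQ
  have hf0 : mkQ fpoly = 0 := by
    rw [hmkQ, Ideal.Quotient.eq_zero_iff_mem, hI]
    exact Ideal.mem_span_singleton_self _
  have habφ : φ a * φ g + φ b * φ (ft ^ p ^ s) = 1 := by
    rw [← map_mul, ← map_mul, ← map_add, hab, map_one]
  have hφftq : mkQ (φ (ft ^ p ^ s)) = - mkQ (U * h) := by
    have : φ (ft ^ p ^ s) = fpoly - U * h := by rw [← hh]; ring
    rw [this, map_sub, hf0, zero_sub]
  have key : mkQ (φ a) * mkQ (φ g) = 1 + mkQ (φ b * (U * h)) := by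
    have := congrArg mkQ habφ
    rw [map_add, map_mul, map_mul, hφftq, map_one] at this
    rw [map_mul]
    linear_combination this
  -- nilpotency of mkQ U
  have hUnil : IsNilpotent (mkQ U) := by
    refine ⟨t, ?_⟩
    rw [← map_pow, hU, ← Polynomial.C_pow, ← map_pow]
    have : mkRt p m t (X ^ t) = 0 := by
      rw [mkRt, Ideal.Quotient.eq_zero_iff_mem]
      exact Ideal.mem_span_singleton_self _
    rw [this, Polynomial.C_0, map_zero]
  have hnil : IsNilpotent (mkQ (φ b * (U * h))) := by
    rw [map_mul, map_mul]
    exact (Commute.all (mkQ (φ b)) _).isNilpotent_mul_left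
      ((Commute.all (mkQ U) (mkQ h)).isNilpotent_mul_right hUnil)
  have hunit : IsUnit (mkQ (φ a) * mkQ (φ g)) := by
    rw [key]; exact hnil.isUnit_one_add
  have : IsUnit (mkQ (φ g)) := ((Commute.all (mkQ (φ a)) (mkQ (φ g))).isUnit_mul_iff.mp hunit).2
  simpa [hφ, hmkQ, hI, hfpoly] using this
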